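/- With I the fat points ideal of a rank-3 line arrangement of n lines as above, for every r ≥ 1 one has α(I^(2r)) ≥ rn. -/

import Mathlib

open scoped Classical

/-- The homogeneous ideal of a point of `ℙ²` with homogeneous coordinate vector `p`:
the ideal generated by all linear forms vanishing at `p`. -/
noncomputable def pointIdeal {K : Type*} [Field K] (p : Fin 3 → K) :
    Ideal (MvPolynomial (Fin 3) K) :=
  Ideal.span {f | f.IsHomogeneous 1 ∧ MvPolynomial.eval p f = 0}

namespace Stmt9Aux

open MvPolynomial
variable {K : Type*} [Field K]
local notation "R" => MvPolynomial (Fin 3) K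




lemma degree_one_single {σ : Type*} (d : σ →₀ ℕ) (h : Finsupp.degree d = 1) :
    ∃ i, d = Finsupp.single i 1 := by
  classical
  have hne : d.support.Nonempty := by
    rcases Finset.eq_empty_or_nonempty d.support with h0 | h0
    · exfalso
      have : d = 0 := Finsupp.support_eq_empty.mp h0
      rw [this, map_zero] at h; simp at h
    · exact h0
  obtain ⟨i, hi⟩ := hne
  have hcard : d.support.card ≤ 1 := by
    have : d.support.card = ∑ _x ∈ d.support, 1 := by simp
    rw [← h, Finsupp.degree]
    rw [this]
    apply Finset.sum_le_sum
    intro x hx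
    exact Nat.one_le_iff_ne_zero.mpr (Finsupp.mem_support_iff.mp hx)
  have hsupp : d.support = {i} := by
    apply Finset.eq_singleton_iff_unique_mem.mpr
    refine ⟨hi, fun x hx => ?_⟩
    by_contra hne
    have : 2 ≤ d.support.card := Finset.one_lt_card.mpr ⟨x, hx, i, hi, hne⟩
    omega
  obtain ⟨-, hd⟩ := Finsupp.support_eq_singleton.mp hsupp
  refine ⟨i, ?_⟩
  have : d i = 1 := by
    rw [Finsupp.degree_apply, hsupp] at h; simpa using h
  rw [hd, this]

lemma homog1_repr {f : R} (hf : f.IsHomogeneous 1) :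
    f = ∑ i : Fin 3, C (coeff (Finsupp.single i 1) f) * X i := by
  ext u
  rw [coeff_sum]
  by_cases hu : ∃ i, u = Finsupp.single i 1
  · obtain ⟨i, rfl⟩ := hu
    rw [Finset.sum_eq_single i]
    · simp [coeff_C_mul, coeff_X']
    · intro j _ hj
      have : ¬ (Finsupp.single i 1 = Finsupp.single j (1:ℕ)) := by
        intro hh
        exact hj ((Finsupp.single_left_inj (by norm_num)).mp hh.symm)
      simp only [coeff_C_mul, coeff_X']
      rw [if_neg (fun h => this h.symm), mul_zero]
    · simp
  · have h1 : coeff u f = 0 := by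
      by_contra hc
      have := hf hc
      obtain ⟨i, hi⟩ := degree_one_single u (by simpa [Finsupp.weight, Finsupp.degree_eq_weight_one, Pi.one_def] using this)
      exact hu ⟨i, hi⟩
    rw [h1]
    symm
    apply Finset.sum_eq_zero
    intro j _
    have : ¬ (u = Finsupp.single j (1:ℕ)) := fun hh => hu ⟨j, hh⟩
    simp only [coeff_C_mul, coeff_X']
    rw [if_neg (fun h => this h.symm), mul_zero]

lemma eval_homog1 {f : R} (hf : f.IsHomogeneous 1) (q : Fin 3 → K) :
    eval q f = ∑ i : Fin 3, coeff (Finsupp.single i 1) f * q i := by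
  conv_lhs => rw [homog1_repr hf]
  simp

lemma aeval_homog1 {A : Type*} [CommSemiring A] [Algebra K A] (g : Fin 3 → A)
    {f : R} (hf : f.IsHomogeneous 1) :
    aeval g f = ∑ i : Fin 3, algebraMap K A (coeff (Finsupp.single i 1) f) * g i := by
  conv_lhs => rw [homog1_repr hf]
  simp

lemma eval_point_comb {f : R} (hf : f.IsHomogeneous 1) (x y : K) (u v : Fin 3 → K) :
    eval (x • u + y • v) f = x * eval u f + y * eval v f := by
  rw [eval_homog1 hf, eval_homog1 hf, eval_homog1 hf]
  rw [Finset.mul_sum, Finset.mul_sum, ← Finset.sum_add_distrib]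
  apply Finset.sum_congr rfl
  intro i _
  simp [Pi.add_apply, Pi.smul_apply, smul_eq_mul]
  ring

lemma eval_smul_point {f : R} (hf : f.IsHomogeneous 1) (x : K) (u : Fin 3 → K) :
    eval (x • u) f = x * eval u f := by
  have := eval_point_comb hf x 0 u 0
  simpa using this

lemma homog0_eq_C {f : R} (hf : f.IsHomogeneous 0) : f = C (coeff 0 f) := by
  ext u
  by_cases hu : u = 0
  · subst hu; simp
  · rw [coeff_C, if_neg (by exact fun h => hu h.symm)]
    by_contra hc
    have := hf hc
    exact hu ((Finsupp.degree_eq_zero_iff u).mp (by simpa [Finsupp.degree_eq_weight_one, Pi.one_def] using this))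



noncomputable def Phi : MvPolynomial (Fin 3) K →ₐ[K] Polynomial (MvPolynomial (Fin 3) K) :=
  MvPolynomial.aeval (fun i => Polynomial.C (X i) * Polynomial.X)

lemma Phi_coeff_mem (f : R) (m : ℕ) :
    (Phi f).coeff m ∈ homogeneousSubmodule (Fin 3) K m := by
  induction f using MvPolynomial.induction_on generalizing m with
  | C a =>
      have : Phi (C a : R) = Polynomial.C (C a) := by
        simp [Phi, aeval_C, Polynomial.algebraMap_apply, MvPolynomial.algebraMap_eq]
      rw [this, Polynomial.coeff_C]
      split
      · next h => subst h; exact isHomogeneous_C _ _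
      · exact Submodule.zero_mem _
  | add f g hf hg =>
      rw [map_add, Polynomial.coeff_add]
      exact Submodule.add_mem _ (hf m) (hg m)
  | mul_X f i hf =>
      have : Phi (f * X i) = (Phi f * Polynomial.C (X i)) * Polynomial.X := by
        rw [map_mul]; simp [Phi]; ring
      rw [this]
      cases m with
      | zero => simp
      | succ m =>
          rw [Polynomial.coeff_mul_X, Polynomial.coeff_mul_C]
          rw [mem_homogeneousSubmodule]
          have := (mem_homogeneousSubmodule _ _).mp (hf m)
          simpa using this.mul (isHomogeneous_X K i)

lemma Phi_eval_one (f : R) : Polynomial.eval 1 (Phi f) = f := by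
  have : ((Polynomial.evalRingHom (1 : R)).comp (Phi (K := K)).toRingHom) =
      RingHom.id R := by
    apply MvPolynomial.ringHom_ext
    · intro a
      simp [Phi, aeval_C, Polynomial.algebraMap_apply, MvPolynomial.algebraMap_eq]
    · intro i
      simp [Phi]
  exact congrArg (fun g => g f) this

lemma Phi_monomial (u : Fin 3 →₀ ℕ) (c : K) :
    Phi (monomial u c : R) = Polynomial.C (monomial u c) * Polynomial.X ^ (Finsupp.degree u) := by
  rw [MvPolynomial.monomial_eq]
  rw [map_mul]
  have h1 : Phi (C c : R) = Polynomial.C (C c) := by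
    simp [Phi, aeval_C, Polynomial.algebraMap_apply, MvPolynomial.algebraMap_eq]
  rw [h1]
  have h2 : Phi (u.prod fun n e => (X n : R) ^ e) =
      Polynomial.C (u.prod fun n e => (X n : R) ^ e) * Polynomial.X ^ (Finsupp.degree u) := by
    rw [Finsupp.prod, map_prod]
    have : ∀ i ∈ u.support, Phi ((X i : R) ^ (u i)) =
        Polynomial.C ((X i : R) ^ (u i)) * Polynomial.X ^ (u i) := by
      intro i _
      rw [map_pow]
      have hx : Phi (X i : R) = Polynomial.C (X i) * Polynomial.X := by
        simp [Phi]
      rw [hx, mul_pow, ← Polynomial.C_pow]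
    rw [Finset.prod_congr rfl this, Finset.prod_mul_distrib, ← map_prod, Finset.prod_pow_eq_pow_sum]
    rfl
  rw [h2, ← mul_assoc, ← Polynomial.C_mul]

lemma Phi_homog {f : R} {d : ℕ} (hf : f.IsHomogeneous d) :
    Phi f = Polynomial.C f * Polynomial.X ^ d := by
  conv_lhs => rw [f.as_sum, map_sum]
  conv_rhs => rw [f.as_sum]
  rw [Finset.sum_congr rfl (fun u hu => Phi_monomial u (coeff u f))]
  rw [map_sum, Finset.sum_mul]
  apply Finset.sum_congr rfl
  intro u hu
  have : Finsupp.degree u = d := by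
    have := hf (MvPolynomial.mem_support_iff.mp hu)
    simpa [Finsupp.degree_eq_weight_one, Pi.one_def] using this
  rw [this]

lemma factor_homog {P G : R} {a dd : ℕ} (hP : P.IsHomogeneous a) (hP0 : P ≠ 0)
    (hG : G ≠ 0) (hF : (P * G).IsHomogeneous dd) :
    ∃ e, a + e = dd ∧ G.IsHomogeneous e := by
  have key : Phi P * Phi G = Polynomial.C (P * G) * Polynomial.X ^ dd := by
    rw [← map_mul, Phi_homog hF]
  rw [Phi_homog hP] at key
  -- exists e with coeff e (Phi G) ≠ 0
  have hPhiG : Phi G ≠ 0 := by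
    intro h
    apply hG
    rw [← Phi_eval_one G, h, Polynomial.eval_zero]
  obtain ⟨e, he⟩ : ∃ e, (Phi G).coeff e ≠ 0 := by
    by_contra hc
    push_neg at hc
    exact hPhiG (Polynomial.ext fun n => by rw [hc n, Polynomial.coeff_zero])
  have hcoeff : ∀ e', (Phi G).coeff e' ≠ 0 → a + e' = dd := by
    intro e' he'
    have h1 : (Polynomial.C P * Polynomial.X ^ a * Phi G).coeff (e' + a) =
        P * (Phi G).coeff e' := by
      rw [mul_assoc, Polynomial.coeff_C_mul, Polynomial.coeff_X_pow_mul]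
    rw [key] at h1
    rw [Polynomial.coeff_C_mul, Polynomial.coeff_X_pow] at h1
    by_cases hdd : e' + a = dd
    · omega
    · rw [if_neg hdd] at h1
      simp only [mul_zero] at h1
      exact absurd h1.symm (mul_ne_zero hP0 he')
  have hea : a + e = dd := hcoeff e he
  refine ⟨e, hea, ?_⟩
  have hGeq : G = (Phi G).coeff e := by
    have hsub : (Phi G).support ⊆ {e} := by
      intro x hx
      have := hcoeff x (Polynomial.mem_support_iff.mp hx)
      simp only [Finset.mem_singleton]
      omega
    have h2 : Polynomial.eval 1 (Phi G) = (Phi G).coeff e := by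
      rw [Polynomial.eval_eq_sum, Polynomial.sum_def]
      rw [Finset.sum_subset hsub (fun x _ hx => by
        rw [Polynomial.notMem_support_iff.mp hx, zero_mul])]
      simp
    exact (Phi_eval_one G).symm.trans h2
  rw [hGeq]
  exact (mem_homogeneousSubmodule _ _).mp (Phi_coeff_mem G e)



noncomputable def Lf (p : Fin 3 → K) (i0 : Fin 3) : R := C ((p i0)⁻¹) * X i0

noncomputable def Psi (p : Fin 3 → K) (i0 : Fin 3) : MvPolynomial (Fin 3) K →ₐ[K] Polynomial (MvPolynomial (Fin 3) K) :=
  MvPolynomial.aeval (fun i => Polynomial.C (C (p i) * Lf p i0) +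
    Polynomial.X * Polynomial.C (X i - C (p i) * Lf p i0))

variable {p : Fin 3 → K} {i0 : Fin 3}


lemma Lf_homog : (Lf p i0).IsHomogeneous 1 := by
  exact isHomogeneous_C_mul_X ((p i0)⁻¹) i0

lemma Lf_ne (hi0 : p i0 ≠ 0) : Lf p i0 ≠ 0 := by
  apply mul_ne_zero
  · exact fun h => hi0 (by simpa [inv_eq_zero] using MvPolynomial.C_injective _ _ (h.trans (map_zero C).symm))
  · exact MvPolynomial.X_ne_zero i0

lemma eval_Lf (hi0 : p i0 ≠ 0) : eval p (Lf p i0) = 1 := by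
  simp [Lf, inv_mul_cancel₀ hi0]

lemma B_mem_pointIdeal (hi0 : p i0 ≠ 0) (i : Fin 3) :
    (X i - C (p i) * Lf p i0 : R) ∈ pointIdeal p := by
  apply Ideal.subset_span
  constructor
  · exact (isHomogeneous_X K i).sub ((Lf_homog).C_mul (p i))
  · simp [eval_Lf hi0]

lemma Psi_C (a : K) : Psi p i0 (C a) = Polynomial.C (C a) := by
  simp [Psi, aeval_C, Polynomial.algebraMap_apply, MvPolynomial.algebraMap_eq]

lemma Psi_X (i : Fin 3) : Psi p i0 (X i) =
    Polynomial.C (C (p i) * Lf p i0) + Polynomial.X * Polynomial.C (X i - C (p i) * Lf p i0) := by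
  simp [Psi]

lemma Psi_linear {f : R} (hf : f.IsHomogeneous 1) :
    Psi p i0 f = Polynomial.C (C (eval p f) * Lf p i0) +
      Polynomial.X * Polynomial.C (f - C (eval p f) * Lf p i0) := by
  conv_lhs => rw [homog1_repr hf]
  rw [map_sum]
  have hterm : ∀ i : Fin 3, (Psi p i0) (C (coeff (Finsupp.single i 1) f) * X i) =
      Polynomial.C (C (coeff (Finsupp.single i 1) f * p i) * Lf p i0) +
      Polynomial.X * Polynomial.C (C (coeff (Finsupp.single i 1) f) * X i -
        C (coeff (Finsupp.single i 1) f * p i) * Lf p i0) := by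
    intro i
    rw [map_mul, Psi_C, Psi_X]
    rw [mul_add, ← Polynomial.C_mul, ← mul_assoc, ← MvPolynomial.C_mul]
    rw [add_right_inj]
    rw [← mul_assoc, mul_comm (Polynomial.C (C (coeff (Finsupp.single i 1) f))) Polynomial.X,
      mul_assoc, ← Polynomial.C_mul]
    rw [mul_right_inj' Polynomial.X_ne_zero, Polynomial.C_inj]
    rw [mul_sub, ← mul_assoc, ← MvPolynomial.C_mul]
  rw [Finset.sum_congr rfl (fun i _ => hterm i), Finset.sum_add_distrib]
  refine congrArg₂ (· + ·) ?_ ?_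
  · rw [← map_sum, ← Finset.sum_mul, ← map_sum, eval_homog1 hf]
  · rw [← Finset.mul_sum, ← map_sum]
    rw [mul_right_inj' Polynomial.X_ne_zero, Polynomial.C_inj]
    rw [Finset.sum_sub_distrib, ← Finset.sum_mul, ← map_sum, ← eval_homog1 hf,
      ← homog1_repr hf]

lemma Psi_gen {g : R} (hg : g.IsHomogeneous 1) (hg0 : eval p g = 0) :
    Psi p i0 g = Polynomial.X * Polynomial.C g := by
  rw [Psi_linear hg, hg0]
  simp

lemma Psi_eval_one (f : R) : Polynomial.eval 1 (Psi p i0 f) = f := by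
  have : ((Polynomial.evalRingHom (1 : R)).comp (Psi p i0).toRingHom) = RingHom.id R := by
    apply MvPolynomial.ringHom_ext
    · intro a
      simp [Psi, aeval_C, Polynomial.algebraMap_apply, MvPolynomial.algebraMap_eq]
    · intro i
      simp [Psi]
  exact congrArg (fun g => g f) this

lemma Psi_coeff_mem (hi0 : p i0 ≠ 0) (f : R) (m : ℕ) :
    (Psi p i0 f).coeff m ∈ (pointIdeal p) ^ m := by
  induction f using MvPolynomial.induction_on generalizing m with
  | C a =>
      rw [Psi_C, Polynomial.coeff_C]
      split
      · next h => subst h; simp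
      · exact Submodule.zero_mem _
  | add f g hf hg =>
      rw [map_add, Polynomial.coeff_add]
      exact Submodule.add_mem _ (hf m) (hg m)
  | mul_X f i hf =>
      rw [map_mul, Psi_X]
      have hre : Psi p i0 f * (Polynomial.C (C (p i) * Lf p i0) +
          Polynomial.X * Polynomial.C (X i - C (p i) * Lf p i0)) =
          Psi p i0 f * Polynomial.C (C (p i) * Lf p i0) +
          (Psi p i0 f * Polynomial.C (X i - C (p i) * Lf p i0)) * Polynomial.X := by ring
      rw [hre, Polynomial.coeff_add]
      apply Submodule.add_mem
      · rw [Polynomial.coeff_mul_C]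
        exact Ideal.mul_mem_right _ _ (hf m)
      · cases m with
        | zero => simp
        | succ m =>
            rw [Polynomial.coeff_mul_X, Polynomial.coeff_mul_C, pow_succ]
            exact Ideal.mul_mem_mul (hf m) (B_mem_pointIdeal hi0 i)

lemma Psi_mem_pow_iff (hi0 : p i0 ≠ 0) {f : R} {k : ℕ} :
    f ∈ (pointIdeal p) ^ k ↔ (Polynomial.X : Polynomial R) ^ k ∣ Psi p i0 f := by
  constructor
  · intro hf
    have hmap : Ideal.map (Psi p i0).toRingHom (pointIdeal p) ≤ Ideal.span {(Polynomial.X : Polynomial R)} := by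
      rw [pointIdeal, Ideal.map_span, Ideal.span_le]
      rintro _ ⟨g, ⟨hg1, hg2⟩, rfl⟩
      rw [SetLike.mem_coe, Ideal.mem_span_singleton]
      exact ⟨Polynomial.C g, Psi_gen hg1 hg2⟩
    have h1 : Psi p i0 f ∈ Ideal.map (Psi p i0).toRingHom ((pointIdeal p) ^ k) :=
      Ideal.mem_map_of_mem _ hf
    rw [Ideal.map_pow] at h1
    have h2 := Ideal.pow_right_mono hmap k h1
    rw [Ideal.span_singleton_pow] at h2
    exact Ideal.mem_span_singleton.mp h2
  · intro hdvd
    have heq : f = Polynomial.eval 1 (Psi p i0 f) := (Psi_eval_one f).symm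
    rw [heq, Polynomial.eval_eq_sum, Polynomial.sum_def]
    apply Ideal.sum_mem
    intro m hm
    by_cases hmk : m < k
    · rw [Polynomial.X_pow_dvd_iff.mp hdvd m hmk]
      simp
    · rw [one_pow, mul_one]
      exact Ideal.pow_le_pow_right (by omega) (Psi_coeff_mem hi0 f m)

lemma cancel1 (hi0 : p i0 ≠ 0) {g G : R} {k : ℕ} (hg : g.IsHomogeneous 1) (hg0 : g ≠ 0)
    (he : eval p g = 0) (h : g * G ∈ (pointIdeal p) ^ k) : G ∈ (pointIdeal p) ^ (k - 1) := by
  rw [Psi_mem_pow_iff hi0] at h ⊢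
  rw [map_mul, Psi_gen hg he] at h
  rw [Polynomial.X_pow_dvd_iff] at h ⊢
  intro t ht
  have h2 := h (t + 1) (by omega)
  rw [show Polynomial.X * Polynomial.C g * Psi p i0 G =
      (Polynomial.C g * Psi p i0 G) * Polynomial.X by ring, Polynomial.coeff_mul_X,
    Polynomial.coeff_C_mul] at h2
  rcases mul_eq_zero.mp h2 with h3 | h3
  · exact absurd h3 hg0
  · exact h3

lemma cancel0 (hi0 : p i0 ≠ 0) {g G : R} {k : ℕ} (hg : g.IsHomogeneous 1)
    (he : eval p g ≠ 0) (h : g * G ∈ (pointIdeal p) ^ k) : G ∈ (pointIdeal p) ^ k := by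
  rw [Psi_mem_pow_iff hi0] at h ⊢
  rw [map_mul, Polynomial.X_pow_dvd_iff] at h
  rw [Polynomial.X_pow_dvd_iff]
  intro t ht
  induction t using Nat.strong_induction_on with
  | _ t IH =>
    have h2 := h t ht
    rw [Polynomial.coeff_mul] at h2
    rw [Finset.sum_eq_single_of_mem ((0 : ℕ), t) (by simp)] at h2
    · have hc0 : (Psi p i0 g).coeff 0 = C (eval p g) * Lf p i0 := by
        rw [Psi_linear hg]
        simp
      rw [hc0] at h2
      rcases mul_eq_zero.mp h2 with h3 | h3
      · exact absurd h3 (mul_ne_zero (fun hh => he (by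
          simpa using MvPolynomial.C_injective _ _ (hh.trans (map_zero C).symm))) (Lf_ne hi0))
      · exact h3
    · rintro ⟨x, y⟩ hxy hne
      rw [Finset.HasAntidiagonal.mem_antidiagonal] at hxy
      have hy : y < t := by
        rcases Nat.eq_zero_or_pos x with hx | hx
        · exfalso; apply hne; subst hx; simp at hxy; subst hxy; rfl
        · omega
      rw [IH y hy (by omega), mul_zero]



noncomputable def eps : MvPolynomial (Fin 3) K →ₐ[K] MvPolynomial (Fin 2) K :=
  MvPolynomial.aeval ![X 0, X 1, 0]

noncomputable def iot : MvPolynomial (Fin 2) K →ₐ[K] MvPolynomial (Fin 3) K :=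
  MvPolynomial.aeval ![X 0, X 1]

lemma X2_dvd_sub_iot_eps (f : R) : (X 2 : R) ∣ f - iot (eps f) := by
  induction f using MvPolynomial.induction_on with
  | C a => simp [eps, iot, aeval_C, MvPolynomial.algebraMap_eq]
  | add f g hf hg =>
      rw [map_add, map_add]
      have : f + g - (iot (eps f) + iot (eps g)) = (f - iot (eps f)) + (g - iot (eps g)) := by
        ring
      rw [this]
      exact dvd_add hf hg
  | mul_X f i hf =>
      rw [map_mul]
      have hXi : (X 2 : R) ∣ X i - iot (eps (X i)) := by
        fin_cases i
        · simp [eps, iot]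
        · simp [eps, iot]
        · simp [eps, iot]
      have : f * X i - iot (eps f * eps (X i)) =
          (f - iot (eps f)) * X i + iot (eps f) * (X i - iot (eps (X i))) := by
        rw [map_mul]; ring
      rw [this]
      exact dvd_add (Dvd.dvd.mul_right hf _) (Dvd.dvd.mul_left hXi _)

lemma X2_dvd_of_eps_zero {f : R} (h : eps f = 0) : (X 2 : R) ∣ f := by
  have := X2_dvd_sub_iot_eps f
  rwa [h, map_zero, sub_zero] at this

lemma prime_X2 : Prime (X 2 : R) := by
  refine ⟨MvPolynomial.X_ne_zero 2, ?_, ?_⟩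
  · intro h
    have h2 := h.map (eps (K := K))
    rw [show eps (X 2 : R) = 0 by simp [eps]] at h2
    exact not_isUnit_zero h2
  · intro a b hab
    obtain ⟨cc, hcc⟩ := hab
    have h0 : eps a * eps b = 0 := by
      rw [← map_mul, hcc, map_mul, show eps (X 2 : R) = 0 by simp [eps], zero_mul]
    rcases mul_eq_zero.mp h0 with h | h
    · exact Or.inl (X2_dvd_of_eps_zero h)
    · exact Or.inr (X2_dvd_of_eps_zero h)

noncomputable def subM (M : Matrix (Fin 3) (Fin 3) K) : MvPolynomial (Fin 3) K →ₐ[K] MvPolynomial (Fin 3) K :=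
  MvPolynomial.aeval (fun i => ∑ j : Fin 3, C (M i j) * X j)

lemma subM_subM (M N : Matrix (Fin 3) (Fin 3) K) (f : R) :
    subM N (subM M f) = subM (M * N) f := by
  have : (subM N).comp (subM M) = subM (M * N) := by
    apply MvPolynomial.algHom_ext
    intro i
    simp only [AlgHom.coe_comp, Function.comp_apply, subM, aeval_X]
    rw [map_sum]
    have hterm : ∀ j : Fin 3, (MvPolynomial.aeval fun i => ∑ j : Fin 3, C (N i j) * X j)
        (C (M i j) * X j) = ∑ k : Fin 3, C (M i j * N j k) * X k := by
      intro j
      rw [map_mul, aeval_C, aeval_X, MvPolynomial.algebraMap_eq, Finset.mul_sum]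
      apply Finset.sum_congr rfl
      intro k _
      rw [← mul_assoc, ← MvPolynomial.C_mul]
    rw [Finset.sum_congr rfl (fun j _ => hterm j), Finset.sum_comm]
    apply Finset.sum_congr rfl
    intro k _
    rw [← Finset.sum_mul, ← map_sum, Matrix.mul_apply]
  exact congrArg (fun g => g f) this

lemma subM_one (f : R) : subM (1 : Matrix (Fin 3) (Fin 3) K) f = f := by
  have : subM (1 : Matrix (Fin 3) (Fin 3) K) = AlgHom.id K R := by
    apply MvPolynomial.algHom_ext
    intro i
    simp only [subM, aeval_X, AlgHom.coe_id, id_eq]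
    rw [Finset.sum_eq_single i]
    · simp [Matrix.one_apply]
    · intro j _ hj
      rw [Matrix.one_apply, if_neg (fun h : i = j => hj h.symm)]
      simp
    · simp
  rw [this]; rfl

lemma subM_C (M : Matrix (Fin 3) (Fin 3) K) (c : K) : subM M (C c) = C c := by
  simp [subM, aeval_C, MvPolynomial.algebraMap_eq]

lemma subM_linear {f : R} (hf : f.IsHomogeneous 1) (M : Matrix (Fin 3) (Fin 3) K) :
    subM M f = ∑ j : Fin 3, C (eval (fun i => M i j) f) * X j := by
  conv_lhs => rw [homog1_repr hf]
  rw [map_sum]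
  have hterm : ∀ i : Fin 3, subM M (C (coeff (Finsupp.single i 1) f) * X i) =
      ∑ j : Fin 3, C (coeff (Finsupp.single i 1) f * M i j) * X j := by
    intro i
    rw [map_mul]
    have h1 : subM M (C (coeff (Finsupp.single i 1) f)) = C (coeff (Finsupp.single i 1) f) := by
      simp [subM, aeval_C, MvPolynomial.algebraMap_eq]
    have h2 : subM M (X i) = ∑ j : Fin 3, C (M i j) * X j := by simp [subM]
    rw [h1, h2, Finset.mul_sum]
    apply Finset.sum_congr rfl
    intro j _
    rw [← mul_assoc, ← MvPolynomial.C_mul]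
  rw [Finset.sum_congr rfl (fun i _ => hterm i), Finset.sum_comm]
  apply Finset.sum_congr rfl
  intro j _
  rw [← Finset.sum_mul, ← map_sum, eval_homog1 hf]



lemma line_basis [Infinite K] {ℓ : R} (hl : ℓ.IsHomogeneous 1) (h0 : ℓ ≠ 0)
    {ι : Type*} (T : Finset ι) (pts : ι → Fin 3 → K) :
    ∃ (a b cvec : Fin 3 → K) (M Minv : Matrix (Fin 3) (Fin 3) K),
      eval a ℓ = 0 ∧ eval b ℓ = 0 ∧ eval cvec ℓ ≠ 0 ∧
      (∀ q : Fin 3 → K, eval q ℓ = 0 → ∃ α β : K, q = α • a + β • b) ∧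
      (∀ j ∈ T, ¬ ∃ t : K, a = t • pts j) ∧
      (∀ x y : K, x • a + y • b = 0 → x = 0 ∧ y = 0) ∧
      (∀ f : MvPolynomial (Fin 3) K, subM Minv (subM M f) = f) ∧
      (∀ f : MvPolynomial (Fin 3) K, subM M (subM Minv f) = f) ∧
      (∀ i j, M i j = ![a, b, cvec] j i) := by
  classical
  set Lphi : (Fin 3 → K) →ₗ[K] K :=
    { toFun := fun q => eval q ℓ
      map_add' := by
        intro q q'
        rw [eval_homog1 hl, eval_homog1 hl, eval_homog1 hl, ← Finset.sum_add_distrib]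
        apply Finset.sum_congr rfl
        intro i _
        simp [mul_add]
      map_smul' := by
        intro x q
        rw [RingHom.id_apply, smul_eq_mul]
        exact eval_smul_point hl x q } with hLphi
  obtain ⟨cvec, hc⟩ : ∃ q : Fin 3 → K, eval q ℓ ≠ 0 := by
    by_contra hall
    push_neg at hall
    apply h0
    have hcoeff : ∀ i, coeff (Finsupp.single i 1) ℓ = 0 := by
      intro i
      have h1 := hall (Pi.single i 1)
      rw [eval_homog1 hl] at h1
      rw [Finset.sum_eq_single i] at h1
      · simpa using h1
      · intro j _ hj
        rw [Pi.single_eq_of_ne (fun h : j = i => hj h), mul_zero]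
      · simp
    conv_lhs => rw [homog1_repr hl]
    simp [hcoeff]
  have hLc : Lphi cvec = eval cvec ℓ := rfl
  have hrange : LinearMap.range Lphi = ⊤ := by
    rw [Submodule.eq_top_iff']
    intro z
    refine ⟨(z * (eval cvec ℓ)⁻¹) • cvec, ?_⟩
    rw [map_smul, hLc, smul_eq_mul, mul_assoc, inv_mul_cancel₀ hc, mul_one]
  have hker2 : Module.finrank K (LinearMap.ker Lphi) = 2 := by
    have h1 := LinearMap.finrank_range_add_finrank_ker Lphi
    rw [hrange, finrank_top] at h1
    have h2 : Module.finrank K (Fin 3 → K) = 3 := by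
      rw [Module.finrank_pi]; simp
    have h3 : Module.finrank K K = 1 := Module.finrank_self K
    omega
  let B2 : Module.Basis (Fin 2) K (LinearMap.ker Lphi) := Module.finBasisOfFinrankEq K _ hker2
  set a0 : Fin 3 → K := (B2 0 : Fin 3 → K) with ha0def
  set b0 : Fin 3 → K := (B2 1 : Fin 3 → K) with hb0def
  have ha0mem : Lphi a0 = 0 := LinearMap.mem_ker.mp (B2 0).2
  have hb0mem : Lphi b0 = 0 := LinearMap.mem_ker.mp (B2 1).2
  have hind : ∀ x y : K, x • a0 + y • b0 = 0 → x = 0 ∧ y = 0 := by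
    intro x y hxy
    have hmem : x • B2 0 + y • B2 1 = 0 := by
      apply Subtype.ext
      rw [Submodule.coe_add, SetLike.val_smul, SetLike.val_smul, ZeroMemClass.coe_zero]
      exact hxy
    have hli := Fintype.linearIndependent_iff.mp B2.linearIndependent ![x, y] (by
      rw [Fin.sum_univ_two, Matrix.cons_val_zero, Matrix.cons_val_one, Matrix.cons_val_zero]
      exact hmem)
    exact ⟨hli 0, hli 1⟩
  have hb0ne : b0 ≠ 0 := by
    intro hb
    have := hind 0 1 (by rw [hb, zero_smul, smul_zero, add_zero])
    exact one_ne_zero this.2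
  have hbadfin : (⋃ j ∈ T, {x : K | ∃ t : K, a0 + x • b0 = t • pts j}).Finite := by
    apply Set.Finite.biUnion T.finite_toSet
    intro j _
    apply Set.Subsingleton.finite
    intro x1 hx1 x2 hx2
    obtain ⟨t1, ht1⟩ := hx1
    obtain ⟨t2, ht2⟩ := hx2
    by_contra hne
    have hdiff : (x1 - x2) • b0 = (t1 - t2) • pts j := by
      rw [sub_smul, sub_smul]
      rw [show x1 • b0 = (a0 + x1 • b0) - a0 by abel, ht1,
          show x2 • b0 = (a0 + x2 • b0) - a0 by abel, ht2]
      abel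
    by_cases hteq : t1 = t2
    · rw [hteq, sub_self, zero_smul] at hdiff
      rcases smul_eq_zero.mp hdiff with h | h
      · exact hne (sub_eq_zero.mp h)
      · exact hb0ne h
    · have htne : t1 - t2 ≠ 0 := sub_ne_zero.mpr hteq
      have hp : pts j = ((t1 - t2)⁻¹ * (x1 - x2)) • b0 := by
        rw [mul_smul, hdiff, smul_smul, inv_mul_cancel₀ htne, one_smul]
      have ha0 : a0 = (t1 * ((t1 - t2)⁻¹ * (x1 - x2)) - x1) • b0 := by
        have h1 : a0 + x1 • b0 = (t1 * ((t1 - t2)⁻¹ * (x1 - x2))) • b0 := by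
          rw [ht1, hp, smul_smul]
        rw [sub_smul, ← h1]
        abel
      have h2 := hind 1 (x1 - t1 * ((t1 - t2)⁻¹ * (x1 - x2))) (by
        rw [one_smul, ha0, ← add_smul,
          show (t1 * ((t1 - t2)⁻¹ * (x1 - x2)) - x1) + (x1 - t1 * ((t1 - t2)⁻¹ * (x1 - x2))) = 0
            by ring, zero_smul])
      exact one_ne_zero h2.1
  obtain ⟨x0, hx0⟩ := hbadfin.infinite_compl.nonempty
  have hx0' : ∀ j ∈ T, ¬ ∃ t : K, a0 + x0 • b0 = t • pts j := by
    intro j hj hex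
    apply hx0
    exact Set.mem_biUnion hj hex
  set a : Fin 3 → K := a0 + x0 • b0 with hadef
  set b : Fin 3 → K := b0 with hbdef
  have hamem : Lphi a = 0 := by
    rw [hadef, map_add, map_smul, ha0mem, hb0mem, smul_zero, add_zero]
  have hbmem : Lphi b = 0 := hb0mem
  have hab : ∀ x y : K, x • a + y • b = 0 → x = 0 ∧ y = 0 := by
    intro x y hxy
    have h1 : x • a0 + (x * x0 + y) • b0 = 0 := by
      rw [← hxy, hadef, hbdef, smul_add, add_smul, smul_smul]
      abel
    obtain ⟨hx, hxy0⟩ := hind _ _ h1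
    refine ⟨hx, ?_⟩
    rw [hx, zero_mul, zero_add] at hxy0
    exact hxy0
  have hspan : ∀ q : Fin 3 → K, eval q ℓ = 0 → ∃ α β : K, q = α • a + β • b := by
    intro q hq
    have hqker : q ∈ LinearMap.ker Lphi := LinearMap.mem_ker.mpr hq
    set qe : LinearMap.ker Lphi := ⟨q, hqker⟩ with hqe
    have h1 : (B2.repr qe 0) • a0 + (B2.repr qe 1) • b0 = q := by
      have h2 := congrArg (fun z : LinearMap.ker Lphi => (z : Fin 3 → K)) (B2.sum_repr qe)
      rw [Fin.sum_univ_two] at h2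
      rw [Submodule.coe_add, SetLike.val_smul, SetLike.val_smul] at h2
      exact h2
    refine ⟨B2.repr qe 0, B2.repr qe 1 - B2.repr qe 0 * x0, ?_⟩
    rw [hadef, hbdef, ← h1]
    module
  have hindep3 : LinearIndependent K ![a, b, cvec] := by
    rw [Fintype.linearIndependent_iff]
    intro g hg
    rw [Fin.sum_univ_three] at hg
    simp only [Matrix.cons_val_zero, Matrix.cons_val_one, Matrix.head_cons,
      Matrix.cons_val_two, Matrix.tail_cons] at hg
    have hLg := congrArg Lphi hg
    rw [map_add, map_add, map_smul, map_smul, map_smul, map_zero, hamem, hbmem,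
      smul_zero, smul_zero, zero_add, zero_add, hLc, smul_eq_mul] at hLg
    have hg2 : g 2 = 0 := by
      rcases mul_eq_zero.mp hLg with h | h
      · exact h
      · exact absurd h hc
    rw [hg2, zero_smul, add_zero] at hg
    obtain ⟨hg0, hg1⟩ := hab _ _ hg
    intro i
    fin_cases i <;> assumption
  have hcard : Fintype.card (Fin 3) = Module.finrank K (Fin 3 → K) := by
    rw [Module.finrank_pi]
  let B3 : Module.Basis (Fin 3) K (Fin 3 → K) := basisOfLinearIndependentOfCardEqFinrank hindep3 hcard
  set M : Matrix (Fin 3) (Fin 3) K := (Pi.basisFun K (Fin 3)).toMatrix ⇑B3 with hMdef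
  have hMinv := (Pi.basisFun K (Fin 3)).invertibleToMatrix B3
  have hMentry : ∀ i j, M i j = ![a, b, cvec] j i := by
    intro i j
    rw [hMdef, Module.Basis.toMatrix_apply, Pi.basisFun_repr]
    congr 1
    rw [show ⇑B3 = ![a, b, cvec] from coe_basisOfLinearIndependentOfCardEqFinrank hindep3 hcard]
  refine ⟨a, b, cvec, M, ⅟M, hamem, hbmem, hc, hspan, hx0', hab, ?_, ?_, hMentry⟩
  · intro f
    rw [subM_subM, mul_invOf_self, subM_one]
  · intro f
    rw [subM_subM, invOf_mul_self, subM_one]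

lemma subM_line {ℓ : R} (hl : ℓ.IsHomogeneous 1) {a b cvec : Fin 3 → K}
    {M : Matrix (Fin 3) (Fin 3) K} (hM : ∀ i j, M i j = ![a, b, cvec] j i)
    (ha : eval a ℓ = 0) (hb : eval b ℓ = 0) :
    subM M ℓ = C (eval cvec ℓ) * X 2 := by
  rw [subM_linear hl M, Fin.sum_univ_three]
  have h0 : (fun i => M i 0) = a := funext fun i => by rw [hM i 0]; rfl
  have h1 : (fun i => M i 1) = b := funext fun i => by rw [hM i 1]; rfl
  have h2 : (fun i => M i 2) = cvec := funext fun i => by rw [hM i 2]; rfl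
  rw [h0, h1, h2, ha, hb]
  simp

lemma prime_linear [Infinite K] {ℓ : R} (hl : ℓ.IsHomogeneous 1) (h0 : ℓ ≠ 0) :
    Prime ℓ := by
  obtain ⟨a, b, cvec, M, Minv, ha, hb, hc, -, -, -, hinv1, hinv2, hMentry⟩ :=
    line_basis hl h0 (∅ : Finset (Fin 1)) (fun _ => 0)
  have hline : subM M ℓ = C (eval cvec ℓ) * X 2 := subM_line hl hMentry ha hb
  have hassoc : Associated (X 2 : R) (subM M ℓ) := by
    rw [hline]
    have hu : IsUnit (C (eval cvec ℓ) : R) :=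
      (isUnit_iff_ne_zero.mpr hc).map MvPolynomial.C
    exact ⟨hu.unit, by rw [IsUnit.unit_spec, mul_comm]⟩
  have hprime : Prime (subM M ℓ) := hassoc.prime prime_X2
  refine ⟨h0, ?_, ?_⟩
  · intro hu
    exact hprime.2.1 (hu.map (subM M))
  · intro x y hdvd
    have h1 : subM M ℓ ∣ subM M x * subM M y := by
      rw [← map_mul]
      exact map_dvd _ hdvd
    rcases hprime.2.2 _ _ h1 with h | h
    · left
      obtain ⟨u, hu⟩ := h
      refine ⟨subM Minv u, ?_⟩
      have := congrArg (subM Minv) hu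
      rwa [hinv1, map_mul, hinv1] at this
    · right
      obtain ⟨u, hu⟩ := h
      refine ⟨subM Minv u, ?_⟩
      have := congrArg (subM Minv) hu
      rwa [hinv1, map_mul, hinv1] at this


lemma degree_eq_sum_fin2 (v : Fin 2 →₀ ℕ) : Finsupp.degree v = v 0 + v 1 := by
  rw [Finsupp.degree_apply, Finset.sum_subset (Finset.subset_univ v.support)
    (fun x _ hx => Finsupp.notMem_support_iff.mp hx), Fin.sum_univ_two]

lemma degree_eq_sum_fin3 (v : Fin 3 →₀ ℕ) : Finsupp.degree v = v 0 + v 1 + v 2 := by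
  rw [Finsupp.degree_apply, Finset.sum_subset (Finset.subset_univ v.support)
    (fun x _ hx => Finsupp.notMem_support_iff.mp hx), Fin.sum_univ_three]

lemma dehomog_inj {h : MvPolynomial (Fin 2) K} {d : ℕ} (hh : h.IsHomogeneous d)
    (h0 : MvPolynomial.aeval ![(Polynomial.X : Polynomial K), 1] h = 0) : h = 0 := by
  by_contra hne
  obtain ⟨u, hu⟩ : ∃ u, coeff u h ≠ 0 := by
    by_contra hc
    push_neg at hc
    exact hne (MvPolynomial.ext _ _ fun v => by rw [hc v, coeff_zero])
  have hdeg : ∀ v : Fin 2 →₀ ℕ, coeff v h ≠ 0 → v 0 + v 1 = d := by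
    intro v hv
    have h1 := hh hv
    rw [← degree_eq_sum_fin2]
    simpa [Finsupp.degree_eq_weight_one, Pi.one_def] using h1
  have hrep : MvPolynomial.aeval ![(Polynomial.X : Polynomial K), 1] h =
      ∑ v ∈ h.support, Polynomial.C (coeff v h) * Polynomial.X ^ (v 0) := by
    conv_lhs => rw [h.as_sum, map_sum]
    apply Finset.sum_congr rfl
    intro v _
    rw [aeval_monomial, Finsupp.prod_fintype _ _ (fun i => pow_zero _), Fin.prod_univ_two]
    simp
  have hkey : (∑ v ∈ h.support, Polynomial.C (coeff v h) * Polynomial.X ^ (v 0)).coeff (u 0)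
      = coeff u h := by
    rw [Polynomial.finset_sum_coeff]
    rw [Finset.sum_eq_single_of_mem u (MvPolynomial.mem_support_iff.mpr hu)]
    · rw [Polynomial.coeff_C_mul, Polynomial.coeff_X_pow, if_pos rfl, mul_one]
    · intro v hv hvne
      rw [Polynomial.coeff_C_mul, Polynomial.coeff_X_pow, if_neg, mul_zero]
      intro heq
      apply hvne
      have e1 := hdeg v (MvPolynomial.mem_support_iff.mp hv)
      have e2 := hdeg u hu
      have h00 : v 0 = u 0 := heq.symm
      have h11 : v 1 = u 1 := by omega
      apply Finsupp.ext
      intro i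
      fin_cases i
      · exact h00
      · exact h11
  rw [← hrep, h0, Polynomial.coeff_zero] at hkey
  exact hu hkey.symm

lemma natDegree_aeval_le {F : R} (g : Fin 3 → Polynomial K) (hg : ∀ i, (g i).natDegree ≤ 1)
    {d : ℕ} (hFd : F.IsHomogeneous d) :
    (MvPolynomial.aeval g F).natDegree ≤ d := by
  conv_lhs => rw [F.as_sum, map_sum]
  apply Polynomial.natDegree_sum_le_of_forall_le
  intro v hv
  rw [aeval_monomial]
  apply le_trans (Polynomial.natDegree_mul_le)
  have h1 : (algebraMap K (Polynomial K) (coeff v F)).natDegree = 0 := by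
    rw [Polynomial.algebraMap_apply]
    simp
  rw [h1, zero_add]
  rw [Finsupp.prod_fintype _ _ (fun i => pow_zero _)]
  apply le_trans (Polynomial.natDegree_prod_le _ _)
  have h2 : ∀ i : Fin 3, ((g i) ^ (v i)).natDegree ≤ v i := by
    intro i
    apply le_trans Polynomial.natDegree_pow_le
    calc v i * (g i).natDegree ≤ v i * 1 := Nat.mul_le_mul_left _ (hg i)
    _ = v i := mul_one _
  apply le_trans (Finset.sum_le_sum (fun i _ => h2 i))
  have h3 := hFd (MvPolynomial.mem_support_iff.mp hv)
  have h4 : v 0 + v 1 + v 2 = d := by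
    rw [← degree_eq_sum_fin3]
    simpa [Finsupp.degree_eq_weight_one, Pi.one_def] using h3
  rw [Fin.sum_univ_three]
  omega

lemma rho_linear (a b : Fin 3 → K) {g : R} (hg : g.IsHomogeneous 1) :
    MvPolynomial.aeval (fun i => Polynomial.C (a i) * Polynomial.X + Polynomial.C (b i)) g
      = Polynomial.C (eval a g) * Polynomial.X + Polynomial.C (eval b g) := by
  rw [aeval_homog1 _ hg]
  have hterm : ∀ i : Fin 3, algebraMap K (Polynomial K) (coeff (Finsupp.single i 1) g) *
      (Polynomial.C (a i) * Polynomial.X + Polynomial.C (b i)) =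
      Polynomial.C (coeff (Finsupp.single i 1) g * a i) * Polynomial.X +
        Polynomial.C (coeff (Finsupp.single i 1) g * b i) := by
    intro i
    rw [Polynomial.algebraMap_apply]
    simp only [Algebra.algebraMap_self, RingHom.id_apply]
    rw [mul_add, ← mul_assoc, ← Polynomial.C_mul, ← Polynomial.C_mul]
  rw [Finset.sum_congr rfl (fun i _ => hterm i), Finset.sum_add_distrib, ← Finset.sum_mul,
    ← map_sum, ← map_sum, eval_homog1 hg, eval_homog1 hg]


lemma restriction [Infinite K] {ℓ : R} (hl : ℓ.IsHomogeneous 1) (hl0 : ℓ ≠ 0)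
    {F : R} {d : ℕ} (hFd : F.IsHomogeneous d) (hndvd : ¬ ℓ ∣ F)
    {s : ℕ} (p : Fin s → Fin 3 → K) (kk : Fin s → ℕ) (T : Finset (Fin s))
    (hpz : ∀ j ∈ T, p j ≠ 0)
    (hdist : ∀ j ∈ T, ∀ j' ∈ T, j ≠ j' → ∀ t : K, p j ≠ t • p j')
    (hon : ∀ j ∈ T, eval (p j) ℓ = 0)
    (hmem : ∀ j ∈ T, F ∈ pointIdeal (p j) ^ (kk j)) :
    ∑ j ∈ T, kk j ≤ d := by
  classical
  obtain ⟨a, b, cvec, M, Minv, ha, hb, hc, hspan, havoid, hab, hinv1, hinv2, hMentry⟩ :=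
    line_basis hl hl0 T p
  have hcoords : ∀ j : Fin s, ∃ αβ : K × K,
      j ∈ T → (p j = αβ.1 • a + αβ.2 • b ∧ αβ.2 ≠ 0) := by
    intro j
    by_cases hj : j ∈ T
    · obtain ⟨αj, βj, hpj⟩ := hspan (p j) (hon j hj)
      refine ⟨(αj, βj), fun _ => ⟨hpj, ?_⟩⟩
      intro hβ
      replace hβ : βj = 0 := hβ
      rw [hβ, zero_smul, add_zero] at hpj
      have hα : αj ≠ 0 := by
        intro h
        rw [h, zero_smul] at hpj
        exact hpz j hj hpj
      exact havoid j hj ⟨αj⁻¹, by rw [hpj, smul_smul, inv_mul_cancel₀ hα, one_smul]⟩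
    · exact ⟨(0, 0), fun h => absurd h hj⟩
  choose γf hγf using hcoords
  set tval : Fin s → K := fun j => (γf j).1 * ((γf j).2)⁻¹ with htval
  set rho' : MvPolynomial (Fin 3) K →ₐ[K] Polynomial K :=
    MvPolynomial.aeval (fun i => Polynomial.C (a i) * Polynomial.X + Polynomial.C (b i))
    with hrho'
  -- root divisibility
  have hroot : ∀ j ∈ T, (Polynomial.X - Polynomial.C (tval j)) ^ (kk j) ∣ rho' F := by
    intro j hj
    obtain ⟨hpj, hβj⟩ := hγf j hj
    have hgen : Ideal.map (rho').toRingHom (pointIdeal (p j)) ≤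
        Ideal.span {Polynomial.X - Polynomial.C (tval j)} := by
      rw [pointIdeal, Ideal.map_span, Ideal.span_le]
      rintro _ ⟨g, ⟨hg1, hg2⟩, rfl⟩
      rw [SetLike.mem_coe, Ideal.mem_span_singleton, Polynomial.dvd_iff_isRoot]
      show Polynomial.IsRoot (rho' g) (tval j)
      have hrg : rho' g = Polynomial.C (eval a g) * Polynomial.X + Polynomial.C (eval b g) :=
        rho_linear a b hg1
      have h0 : (γf j).1 * eval a g + (γf j).2 * eval b g = 0 := by
        have h1 := hg2
        rw [hpj, eval_point_comb hg1] at h1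
        exact h1
      rw [Polynomial.IsRoot, hrg]
      simp only [Polynomial.eval_add, Polynomial.eval_mul, Polynomial.eval_C, Polynomial.eval_X]
      rw [htval]
      have h2 : eval a g * ((γf j).1 * ((γf j).2)⁻¹) + eval b g =
          ((γf j).2)⁻¹ * ((γf j).1 * eval a g + (γf j).2 * eval b g) := by
        field_simp
      rw [h2, h0, mul_zero]
    have h1 : rho' F ∈ Ideal.map (rho').toRingHom ((pointIdeal (p j)) ^ (kk j)) :=
      Ideal.mem_map_of_mem _ (hmem j hj)
    rw [Ideal.map_pow] at h1
    have h2 := Ideal.pow_right_mono hgen (kk j) h1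
    rw [Ideal.span_singleton_pow] at h2
    exact Ideal.mem_span_singleton.mp h2
  -- distinctness of the roots
  have htinj : ∀ j ∈ T, ∀ j' ∈ T, j ≠ j' → tval j ≠ tval j' := by
    intro j hj j' hj' hne heq
    obtain ⟨hpj, hβj⟩ := hγf j hj
    obtain ⟨hpj', hβj'⟩ := hγf j' hj'
    apply hdist j hj j' hj' hne ((γf j).2 * ((γf j').2)⁻¹)
    rw [hpj, hpj']
    rw [htval] at heq
    simp only at heq
    have hα : (γf j).2 * ((γf j').2)⁻¹ * (γf j').1 = (γf j).1 := by
      field_simp at heq ⊢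
      linear_combination -heq
    have hβ : (γf j).2 * ((γf j').2)⁻¹ * (γf j').2 = (γf j).2 := by
      field_simp
    rw [smul_add, smul_smul, smul_smul, hα, hβ]
  -- nonvanishing of the restriction
  have hg1ne : rho' F ≠ 0 := by
    intro hz
    apply hndvd
    set rho2 : MvPolynomial (Fin 3) K →ₐ[K] MvPolynomial (Fin 2) K :=
      MvPolynomial.aeval (fun i => C (a i) * X 0 + C (b i) * X 1) with hrho2
    have hcomp : (MvPolynomial.aeval ![(Polynomial.X : Polynomial K), 1]).comp rho2 = rho' := by
      apply MvPolynomial.algHom_ext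
      intro i
      simp [rho2, rho']
    have hr2homog : (rho2 F).IsHomogeneous d := by
      have h1 := hFd.aeval (fun i => (C (a i) * X 0 + C (b i) * X 1 : MvPolynomial (Fin 2) K))
        (fun i => (isHomogeneous_C_mul_X (a i) 0).add (isHomogeneous_C_mul_X (b i) 1))
      rw [one_mul] at h1
      exact h1
    have hr2z : rho2 F = 0 := by
      apply dehomog_inj hr2homog
      have := congrArg (fun φ => φ F) hcomp
      simp only [AlgHom.coe_comp, Function.comp_apply] at this
      rw [this, hz]
    have hcomp2 : (eps (K := K)).comp (subM M) = rho2 := by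
      apply MvPolynomial.algHom_ext
      intro i
      simp only [AlgHom.coe_comp, Function.comp_apply, subM, aeval_X]
      rw [map_sum, Fin.sum_univ_three]
      rw [hMentry i 0, hMentry i 1, hMentry i 2]
      simp [eps, rho2, MvPolynomial.algebraMap_eq]
    have hX2dvd : (X 2 : R) ∣ subM M F := by
      apply X2_dvd_of_eps_zero
      have := congrArg (fun φ => φ F) hcomp2
      simp only [AlgHom.coe_comp, Function.comp_apply] at this
      rw [this, hr2z]
    obtain ⟨H, hH⟩ := hX2dvd
    set γ : K := eval cvec ℓ with hγdef
    have hγ : γ ≠ 0 := hc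
    have hs : subM M ℓ = C γ * X 2 := subM_line hl hMentry ha hb
    have hlX : ℓ = C γ * subM Minv (X 2) := by
      have h1 := congrArg (subM Minv) hs
      rw [hinv1, map_mul, subM_C] at h1
      exact h1
    have hF2 : F = subM Minv (X 2) * subM Minv H := by
      have h1 := congrArg (subM Minv) hH
      rwa [hinv1, map_mul] at h1
    refine ⟨C γ⁻¹ * subM Minv H, ?_⟩
    calc F = subM Minv (X 2) * subM Minv H := hF2
    _ = (C γ * subM Minv (X 2)) * (C γ⁻¹ * subM Minv H) := by
        rw [mul_mul_mul_comm, ← MvPolynomial.C_mul, mul_inv_cancel₀ hγ, MvPolynomial.C_1, one_mul]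
    _ = ℓ * (C γ⁻¹ * subM Minv H) := by rw [← hlX]
  -- put the roots together
  have hprod : (∏ j ∈ T, (Polynomial.X - Polynomial.C (tval j)) ^ (kk j)) ∣ rho' F := by
    apply Finset.prod_dvd_of_coprime
    · intro j hj j' hj' hne
      have h1 : IsCoprime (Polynomial.X - Polynomial.C (tval j))
          (Polynomial.X - Polynomial.C (tval j')) :=
        Polynomial.isCoprime_X_sub_C_of_isUnit_sub
          (isUnit_iff_ne_zero.mpr (sub_ne_zero.mpr (htinj j hj j' hj' hne)))
      exact h1.pow
    · intro j hj
      exact hroot j hj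
  have hdeg1 := Polynomial.natDegree_le_of_dvd hprod hg1ne
  have hdegprod : (∏ j ∈ T, (Polynomial.X - Polynomial.C (tval j)) ^ (kk j)).natDegree
      = ∑ j ∈ T, kk j := by
    rw [Polynomial.natDegree_prod _ _ (fun j _ => pow_ne_zero _ (Polynomial.X_sub_C_ne_zero _))]
    apply Finset.sum_congr rfl
    intro j _
    rw [Polynomial.natDegree_pow, Polynomial.natDegree_X_sub_C, mul_one]
  have hdeg2 : (rho' F).natDegree ≤ d := by
    apply natDegree_aeval_le
    · intro i
      apply le_trans (Polynomial.natDegree_add_le _ _)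
      apply max_le
      · exact le_trans (Polynomial.natDegree_C_mul_le _ _) Polynomial.natDegree_X_le
      · rw [Polynomial.natDegree_C]
        omega
    · exact hFd
  omega


lemma dvd_linear {g g' : R} (hg : g.IsHomogeneous 1) (hg' : g'.IsHomogeneous 1)
    (h0 : g ≠ 0) (hd : g ∣ g') : ∃ c : K, g' = c • g := by
  obtain ⟨q, hq⟩ := hd
  by_cases hq0 : q = 0
  · exact ⟨0, by rw [hq, hq0, mul_zero, zero_smul]⟩
  · by_cases hg'0 : g' = 0
    · exact ⟨0, by rw [hg'0, zero_smul]⟩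
    · obtain ⟨e, he, hqe⟩ := factor_homog hg h0 hq0 (hq ▸ hg')
      have he0 : e = 0 := by omega
      subst he0
      refine ⟨coeff 0 q, ?_⟩
      have hqc : q = C (coeff 0 q) := homog0_eq_C hqe
      rw [hq, MvPolynomial.smul_eq_C_mul]
      conv_lhs => rw [hqc]
      ring

lemma prod_dvd_lines [Infinite K] {n : ℕ} (ℓ : Fin n → MvPolynomial (Fin 3) K)
    (hl : ∀ i, (ℓ i).IsHomogeneous 1)
    (hnz : ∀ i, ℓ i ≠ 0) (hprop : ∀ i j, i ≠ j → ∀ c : K, ℓ i ≠ c • ℓ j)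
    {F : R} (hdvd : ∀ i, ℓ i ∣ F) : (∏ i, ℓ i) ∣ F := by
  have claim : ∀ S : Finset (Fin n), (∏ i ∈ S, ℓ i) ∣ F := by
    intro S
    induction S using Finset.induction_on with
    | empty => simpa using one_dvd F
    | @insert i S hiS ih =>
        rw [Finset.prod_insert hiS]
        obtain ⟨G, hG⟩ := ih
        have hprime := prime_linear (hl i) (hnz i)
        have hnd : ¬ ℓ i ∣ ∏ x ∈ S, ℓ x := by
          intro hdd
          obtain ⟨j, hjS, hdj⟩ := hprime.exists_mem_finset_dvd hdd
          obtain ⟨c, hcc⟩ := dvd_linear (hl i) (hl j) (hnz i) hdj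
          exact hprop j i (fun hji => hiS (hji ▸ hjS)) c hcc
        have h3 : ℓ i ∣ (∏ x ∈ S, ℓ x) * G := hG ▸ hdvd i
        obtain ⟨G', hG'⟩ := (hprime.2.2 _ _ h3).resolve_left hnd
        exact ⟨G', by rw [hG, hG']; ring⟩
  exact claim Finset.univ

lemma peel {pt : Fin 3 → K} (hpt : pt ≠ 0) {n : ℕ} (ℓ : Fin n → MvPolynomial (Fin 3) K)
    (hl : ∀ i, (ℓ i).IsHomogeneous 1) (hnz : ∀ i, ℓ i ≠ 0) {G : R} :
    ∀ (S : Finset (Fin n)) (k : ℕ), (∏ i ∈ S, ℓ i) * G ∈ pointIdeal pt ^ k →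
      G ∈ pointIdeal pt ^ (k - (S.filter (fun i => eval pt (ℓ i) = 0)).card) := by
  obtain ⟨i0, hi0⟩ : ∃ i0, pt i0 ≠ 0 := Function.ne_iff.mp hpt
  intro S
  induction S using Finset.induction_on with
  | empty => intro k h; simpa using h
  | @insert i S hiS ih =>
      intro k h
      rw [Finset.prod_insert hiS, mul_assoc] at h
      rw [Finset.filter_insert]
      by_cases hev : eval pt (ℓ i) = 0
      · rw [if_pos hev]
        have h1 := cancel1 hi0 (hl i) (hnz i) hev h
        have h2 := ih (k - 1) h1
        have hcard : (insert i (S.filter (fun i => eval pt (ℓ i) = 0))).card =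
            (S.filter (fun i => eval pt (ℓ i) = 0)).card + 1 :=
          Finset.card_insert_of_notMem (fun hmem => hiS (Finset.mem_of_mem_filter i hmem))
        rw [hcard]
        have : k - 1 - (S.filter (fun i => eval pt (ℓ i) = 0)).card =
            k - ((S.filter (fun i => eval pt (ℓ i) = 0)).card + 1) := by omega
        rwa [← this]
      · rw [if_neg hev]
        exact ih k (cancel0 hi0 (hl i) hev h)

lemma lines_count {n s : ℕ} (ℓ : Fin n → MvPolynomial (Fin 3) K)
    (hl : ∀ i, (ℓ i).IsHomogeneous 1)
    (p : Fin s → Fin 3 → K) (m : Fin s → ℕ)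
    (hm : ∀ j, m j = (Finset.univ.filter
      (fun i => MvPolynomial.eval (p j) (ℓ i) = 0)).card)
    (hcomplete : ∀ q : Fin 3 → K, q ≠ 0 →
      2 ≤ (Finset.univ.filter (fun i => MvPolynomial.eval q (ℓ i) = 0)).card →
      ∃ j, ∃ c : K, q = c • p j)
    (i : Fin n) (hn : 2 ≤ n) :
    n - 1 ≤ ∑ j ∈ Finset.univ.filter (fun j => eval (p j) (ℓ i) = 0), (m j - 1) := by
  classical
  -- intersection points
  have hinter : ∀ i' : Fin n, i' ≠ i → ∃ j : Fin s,
      eval (p j) (ℓ i) = 0 ∧ eval (p j) (ℓ i') = 0 := by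
    intro i' hne
    obtain ⟨Li, hLi⟩ : ∃ L : (Fin 3 → K) →ₗ[K] K, ∀ q, L q = eval q (ℓ i) :=
      ⟨{ toFun := fun q => eval q (ℓ i)
         map_add' := by
           intro q q'
           rw [eval_homog1 (hl i), eval_homog1 (hl i), eval_homog1 (hl i),
             ← Finset.sum_add_distrib]
           apply Finset.sum_congr rfl
           intro t _
           simp [mul_add]
         map_smul' := by
           intro x q
           rw [RingHom.id_apply, smul_eq_mul]
           exact eval_smul_point (hl i) x q }, fun _ => rfl⟩
    obtain ⟨Li', hLi'⟩ : ∃ L : (Fin 3 → K) →ₗ[K] K, ∀ q, L q = eval q (ℓ i') :=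
      ⟨{ toFun := fun q => eval q (ℓ i')
         map_add' := by
           intro q q'
           rw [eval_homog1 (hl i'), eval_homog1 (hl i'), eval_homog1 (hl i'),
             ← Finset.sum_add_distrib]
           apply Finset.sum_congr rfl
           intro t _
           simp [mul_add]
         map_smul' := by
           intro x q
           rw [RingHom.id_apply, smul_eq_mul]
           exact eval_smul_point (hl i') x q }, fun _ => rfl⟩
    set LL : (Fin 3 → K) →ₗ[K] (Fin 2 → K) := LinearMap.pi (fun t => ![Li, Li'] t) with hLL
    have hker : LinearMap.ker LL ≠ ⊥ := by
      intro hbot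
      have h1 := LinearMap.finrank_range_add_finrank_ker LL
      rw [hbot, finrank_bot] at h1
      have h2 : Module.finrank K (Fin 3 → K) = 3 := by
        rw [Module.finrank_pi]; simp
      have h3 : Module.finrank K (LinearMap.range LL) ≤ Module.finrank K (Fin 2 → K) :=
        Submodule.finrank_le _
      have h4 : Module.finrank K (Fin 2 → K) = 2 := by
        rw [Module.finrank_pi]; simp
      omega
    obtain ⟨q, hqker, hq0⟩ := Submodule.exists_mem_ne_zero_of_ne_bot hker
    have hqi : eval q (ℓ i) = 0 := by
      have := congrFun (LinearMap.mem_ker.mp hqker) 0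
      rw [hLL] at this
      rw [← hLi q]
      simpa [LinearMap.pi_apply] using this
    have hqi' : eval q (ℓ i') = 0 := by
      have := congrFun (LinearMap.mem_ker.mp hqker) 1
      rw [hLL] at this
      rw [← hLi' q]
      simpa [LinearMap.pi_apply] using this
    have hqcard : 2 ≤ (Finset.univ.filter (fun t => MvPolynomial.eval q (ℓ t) = 0)).card := by
      have hsub : ({i, i'} : Finset (Fin n)) ⊆
          Finset.univ.filter (fun t => MvPolynomial.eval q (ℓ t) = 0) := by
        intro t ht
        rcases Finset.mem_insert.mp ht with rfl | ht
        · exact Finset.mem_filter.mpr ⟨Finset.mem_univ _, hqi⟩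
        · rw [Finset.mem_singleton.mp ht]
          exact Finset.mem_filter.mpr ⟨Finset.mem_univ _, hqi'⟩
      calc 2 = ({i, i'} : Finset (Fin n)).card := (Finset.card_pair (fun h => hne h.symm)).symm
      _ ≤ _ := Finset.card_le_card hsub
    obtain ⟨j, c, hjc⟩ := hcomplete q hq0 hqcard
    have hcne : c ≠ 0 := by
      intro h
      rw [h, zero_smul] at hjc
      exact hq0 hjc
    refine ⟨j, ?_, ?_⟩
    · have h1 : eval (c • p j) (ℓ i) = 0 := hjc ▸ hqi
      rw [eval_smul_point (hl i)] at h1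
      rcases mul_eq_zero.mp h1 with h | h
      · exact absurd h hcne
      · exact h
    · have h1 : eval (c • p j) (ℓ i') = 0 := hjc ▸ hqi'
      rw [eval_smul_point (hl i')] at h1
      rcases mul_eq_zero.mp h1 with h | h
      · exact absurd h hcne
      · exact h
  -- total function by choice
  obtain ⟨i1, hi1⟩ : ∃ i1 : Fin n, i1 ≠ i := by
    have h0 : (0 : ℕ) < n := by omega
    have h1 : (1 : ℕ) < n := by omega
    by_cases hcase : i = ⟨0, h0⟩
    · exact ⟨⟨1, h1⟩, by rw [hcase]; exact Fin.ne_of_val_ne (by simp)⟩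
    · exact ⟨⟨0, h0⟩, fun h => hcase h.symm⟩
  obtain ⟨j0, hj0⟩ := hinter i1 hi1
  have hex : ∀ i' : Fin n, ∃ j : Fin s,
      i' ≠ i → (eval (p j) (ℓ i) = 0 ∧ eval (p j) (ℓ i') = 0) := by
    intro i'
    by_cases h : i' = i
    · exact ⟨j0, fun hh => absurd h hh⟩
    · obtain ⟨j, hj⟩ := hinter i' h
      exact ⟨j, fun _ => hj⟩
  choose ff hff using hex
  have hmap : ∀ x ∈ Finset.univ.erase i,
      ff x ∈ Finset.univ.filter (fun j => eval (p j) (ℓ i) = 0) := by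
    intro x hx
    have hxne : x ≠ i := Finset.ne_of_mem_erase hx
    exact Finset.mem_filter.mpr ⟨Finset.mem_univ _, (hff x hxne).1⟩
  have hcount := Finset.card_eq_sum_card_fiberwise hmap
  have hcard1 : (Finset.univ.erase i).card = n - 1 := by
    rw [Finset.card_erase_of_mem (Finset.mem_univ i), Finset.card_univ, Fintype.card_fin]
  have hfiber : ∀ j ∈ Finset.univ.filter (fun j => eval (p j) (ℓ i) = 0),
      ((Finset.univ.erase i).filter (fun x => ff x = j)).card ≤ m j - 1 := by
    intro j hj
    have hsub : (Finset.univ.erase i).filter (fun x => ff x = j) ⊆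
        (Finset.univ.filter (fun i' => eval (p j) (ℓ i') = 0)).erase i := by
      intro x hx
      obtain ⟨hx1, hx2⟩ := Finset.mem_filter.mp hx
      have hxne : x ≠ i := Finset.ne_of_mem_erase hx1
      apply Finset.mem_erase.mpr
      refine ⟨hxne, Finset.mem_filter.mpr ⟨Finset.mem_univ _, ?_⟩⟩
      rw [← hx2]
      exact (hff x hxne).2
    have hcard2 : ((Finset.univ.filter (fun i' => eval (p j) (ℓ i') = 0)).erase i).card
        = m j - 1 := by
      rw [Finset.card_erase_of_mem, ← hm j]
      exact Finset.mem_filter.mpr ⟨Finset.mem_univ _, (Finset.mem_filter.mp hj).2⟩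
    calc _ ≤ _ := Finset.card_le_card hsub
    _ = m j - 1 := hcard2
  calc n - 1 = (Finset.univ.erase i).card := hcard1.symm
  _ = _ := hcount
  _ ≤ ∑ j ∈ Finset.univ.filter (fun j => eval (p j) (ℓ i) = 0), (m j - 1) :=
      Finset.sum_le_sum hfiber

lemma main_ind [Infinite K] {n s : ℕ} (ℓ : Fin n → MvPolynomial (Fin 3) K)
    (hl : ∀ i, (ℓ i).IsHomogeneous 1) (hnz : ∀ i, ℓ i ≠ 0)
    (hprop : ∀ i j, i ≠ j → ∀ c : K, ℓ i ≠ c • ℓ j)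
    (p : Fin s → (Fin 3 → K)) (hp : ∀ j, p j ≠ 0)
    (hpdist : ∀ j k, j ≠ k → ∀ c : K, p j ≠ c • p k)
    (m : Fin s → ℕ)
    (hm : ∀ j, m j = (Finset.univ.filter
      (fun i => MvPolynomial.eval (p j) (ℓ i) = 0)).card)
    (hsing : ∀ j, 2 ≤ m j)
    (hcomplete : ∀ q : Fin 3 → K, q ≠ 0 →
      2 ≤ (Finset.univ.filter (fun i => MvPolynomial.eval q (ℓ i) = 0)).card →
      ∃ j, ∃ c : K, q = c • p j)
    (hn : 2 ≤ n) :
    ∀ r : ℕ, ∀ F : MvPolynomial (Fin 3) K, F ≠ 0 → ∀ d : ℕ, F.IsHomogeneous d →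
      (∀ j, F ∈ pointIdeal (p j) ^ ((2 * r) * (m j - 1))) → r * n ≤ d := by
  intro r
  induction r with
  | zero => intro F hF d hFd hmem; simp
  | succ r IH =>
      intro F hF d hFd hmem
      by_cases hdvd : ∀ i, ℓ i ∣ F
      · -- all lines divide F
        obtain ⟨G, hG⟩ := prod_dvd_lines ℓ hl hnz hprop hdvd
        have hG0 : G ≠ 0 := by
          intro h
          rw [h, mul_zero] at hG
          exact hF hG
        have hP0 : (∏ i, ℓ i) ≠ 0 := Finset.prod_ne_zero_iff.mpr (fun i _ => hnz i)
        have hPhom : (∏ i, ℓ i).IsHomogeneous n := by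
          have h1 := MvPolynomial.IsHomogeneous.prod Finset.univ ℓ (fun _ => 1)
            (fun i _ => hl i)
          simpa using h1
        obtain ⟨e, hne, hGe⟩ := factor_homog hPhom hP0 hG0 (hG ▸ hFd)
        have hGmem : ∀ j, G ∈ pointIdeal (p j) ^ ((2 * r) * (m j - 1)) := by
          intro j
          have h1 := peel (hp j) ℓ hl hnz Finset.univ ((2 * (r+1)) * (m j - 1)) (hG ▸ hmem j)
          have h2 : (Finset.univ.filter (fun i => eval (p j) (ℓ i) = 0)).card = m j :=
            (hm j).symm
          rw [h2] at h1
          refine SetLike.le_def.mp (Ideal.pow_le_pow_right ?_) h1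
          have h3 : m j ≤ 2 * (m j - 1) := by
            have := hsing j
            omega
          apply Nat.le_sub_of_add_le
          have h4 : (2 * (r+1)) * (m j - 1) = (2 * r) * (m j - 1) + 2 * (m j - 1) := by ring
          rw [h4]
          exact Nat.add_le_add_left h3 _
        have h5 := IH G hG0 e hGe hGmem
        have h6 : (r + 1) * n = r * n + n := by ring
        omega
      · -- some line does not divide F
        push_neg at hdvd
        obtain ⟨i, hi⟩ := hdvd
        have hres := restriction (hl i) (hnz i) hFd hi p
          (fun j => (2 * (r+1)) * (m j - 1))
          (Finset.univ.filter (fun j => eval (p j) (ℓ i) = 0))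
          (fun j _ => hp j)
          (fun j _ j' _ hne c => hpdist j j' hne c)
          (fun j hj => (Finset.mem_filter.mp hj).2)
          (fun j _ => hmem j)
        have hcnt := lines_count ℓ hl p m hm hcomplete i hn
        have hmulsum : ∑ j ∈ Finset.univ.filter (fun j => eval (p j) (ℓ i) = 0),
            (2 * (r+1)) * (m j - 1) =
            (2 * (r+1)) * ∑ j ∈ Finset.univ.filter (fun j => eval (p j) (ℓ i) = 0),
              (m j - 1) := by
          rw [Finset.mul_sum]
        have hchain : (r + 1) * n ≤ d := by
          calc (r + 1) * n ≤ (r + 1) * (2 * (n - 1)) :=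
                Nat.mul_le_mul_left _ (by omega)
          _ = (2 * (r+1)) * (n - 1) := by ring
          _ ≤ (2 * (r+1)) * ∑ j ∈ Finset.univ.filter
                (fun j => eval (p j) (ℓ i) = 0), (m j - 1) :=
                Nat.mul_le_mul_left _ (le_trans (by omega) hcnt)
          _ = _ := hmulsum.symm
          _ ≤ d := hres
        exact hchain

end Stmt9Aux

open Stmt9Aux in
/-- Proposition 3.3, even case: for the fat points ideal `I = ∩ I(P_j)^(n_j - 1)` of a rank-3
arrangement of `n` lines in `ℙ²_K` (char `K = 0`) with singular points `P_j` lying on `n_j`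
lines, every nonzero homogeneous element of the symbolic power
`I^(2r) = ∩ I(P_j)^(2r(n_j-1))` has degree at least `rn`. -/
theorem stmt9 {K : Type*} [Field K] [CharZero K] (n s : ℕ)
    (ℓ : Fin n → MvPolynomial (Fin 3) K)
    (hl : ∀ i, (ℓ i).IsHomogeneous 1) (hnz : ∀ i, ℓ i ≠ 0)
    (hprop : ∀ i j, i ≠ j → ∀ c : K, ℓ i ≠ c • ℓ j)
    (hrank : ∀ q : Fin 3 → K, (∀ i, MvPolynomial.eval q (ℓ i) = 0) → q = 0)
    (p : Fin s → (Fin 3 → K)) (hp : ∀ j, p j ≠ 0)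
    (hpdist : ∀ j k, j ≠ k → ∀ c : K, p j ≠ c • p k)
    (m : Fin s → ℕ)
    (hm : ∀ j, m j = (Finset.univ.filter
      (fun i => MvPolynomial.eval (p j) (ℓ i) = 0)).card)
    (hsing : ∀ j, 2 ≤ m j)
    (hcomplete : ∀ q : Fin 3 → K, q ≠ 0 →
      2 ≤ (Finset.univ.filter (fun i => MvPolynomial.eval q (ℓ i) = 0)).card →
      ∃ j, ∃ c : K, q = c • p j)
    (r : ℕ) (hr : 1 ≤ r)
    (F : MvPolynomial (Fin 3) K) (hF : F ≠ 0) (d : ℕ) (hFd : F.IsHomogeneous d)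
    (hFmem : F ∈ ⨅ j, pointIdeal (p j) ^ ((2 * r) * (m j - 1))) :
    r * n ≤ d := by
  haveI : Infinite K := Infinite.of_injective (Nat.cast : ℕ → K) Nat.cast_injective
  have hmem : ∀ j, F ∈ pointIdeal (p j) ^ ((2 * r) * (m j - 1)) :=
    fun j => Ideal.mem_iInf.mp hFmem j
  rcases Nat.lt_or_ge n 2 with hn | hn
  · -- n ≤ 1 : rank condition forces n ≥ 2 unless n small; handle directly
    interval_cases n
    · simp
    · -- n = 1: contradiction with hrank
      exfalso
      obtain ⟨a, b, cvec, M, Minv, ha, hb, hc, hspan, havoid, hab, hinv1, hinv2, hMentry⟩ :=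
        line_basis (hl 0) (hnz 0) (∅ : Finset (Fin 1)) (fun _ => (0 : Fin 3 → K))
      have ha0 : a ≠ 0 := by
        intro h
        have := hab 1 0 (by rw [h, smul_zero, zero_smul, add_zero])
        exact one_ne_zero this.1
      apply ha0
      apply hrank a
      intro i
      have : i = 0 := Subsingleton.elim i 0
      rw [this]
      exact ha
  · exact main_ind ℓ hl hnz hprop p hp hpdist m hm hsing hcomplete hn r F hF d hFd hmem
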